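/- Let D be a simple digraph in which all directed cycle lengths belong to a set K of size k. Then the list dichromatic number of D is at most k+1. -/

import Mathlib

/-- A directed cycle of length `n` in the digraph with arc relation `A`:
an injective map `f : ZMod n → V` with an arc from each vertex to the next. -/
def IsDicycle {V : Type*} (A : V → V → Prop) (n : ℕ) (f : ZMod n → V) : Prop :=
  0 < n ∧ Function.Injective f ∧ ∀ i, A (f i) (f (i + 1))

/-- A set of vertices is acyclic if it contains no directed cycle. -/
def AcyclicSet {V : Type*} (A : V → V → Prop) (S : Set V) : Prop :=
  ∀ (n : ℕ) (f : ZMod n → V), (∀ i, f i ∈ S) → ¬ IsDicycle A n f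

/-- The dichromatic number: least `k` such that the vertices can be colored with `k`
colors with every color class acyclic. -/
noncomputable def dichromatic {V : Type*} (A : V → V → Prop) : ℕ :=
  sInf {k | ∃ c : V → Fin k, ∀ i, AcyclicSet A (c ⁻¹' {i})}

/-- The maximum size of an acyclic set of vertices. -/
noncomputable def maxAcyclic {V : Type*} [Fintype V] (A : V → V → Prop) : ℕ :=
  sSup {k | ∃ S : Finset V, AcyclicSet A ↑S ∧ S.card = k}

lemma isDicycle_of_list {V : Type*} (A : V → V → Prop) (l : List V) (hne : l ≠ [])
    (hnd : l.Nodup) (hch : l.Chain' A)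
    (hlast : A (l.getLast hne) (l.head hne)) :
    ∃ f : ZMod l.length → V, IsDicycle A l.length f := by
  have hpos : 0 < l.length := List.length_pos_iff.mpr hne
  haveI : NeZero l.length := ⟨hpos.ne'⟩
  have hval : ∀ i : ZMod l.length, (i + 1).val = (i.val + 1) % l.length := by
    intro i
    rcases Nat.lt_or_ge l.length 2 with h | h
    · have a := ZMod.val_lt (i + 1)
      have b := ZMod.val_lt i
      have h1 : (i.val + 1) % l.length = 0 := by
        have hl1 : l.length = 1 := by omega
        simp [hl1, Nat.mod_one]
      omega
    · haveI : Fact (1 < l.length) := ⟨h⟩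
      rw [ZMod.val_add, ZMod.val_one]
  refine ⟨fun i => l.get ⟨i.val, ZMod.val_lt i⟩, hpos, ?_, ?_⟩
  · intro i j hij
    have h2 : i.val = j.val := by
      have := List.nodup_iff_injective_get.mp hnd hij
      simpa using congrArg Fin.val this
    exact ZMod.val_injective _ h2
  · intro i
    by_cases hlt : i.val + 1 < l.length
    · have hv : (i + 1).val = i.val + 1 := by rw [hval, Nat.mod_eq_of_lt hlt]
      have hc := List.isChain_iff_getElem.mp hch i.val (by omega)
      simp only [hv]
      exact hc
    · have he : i.val + 1 = l.length := by have := ZMod.val_lt i; omega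
      have hv0 : (i + 1).val = 0 := by rw [hval, he, Nat.mod_self]
      simp only [hv0]
      have h1 : l.get ⟨i.val, ZMod.val_lt i⟩ = l.getLast hne := by
        rw [List.getLast_eq_getElem]
        have hiv : i.val = l.length - 1 := by omega
        simp only [hiv]
        rfl
      have h2 : l.get ⟨0, hpos⟩ = l.head hne := by
        cases l with
        | nil => exact absurd rfl hne
        | cons a t => rfl
      rw [h1, h2]
      exact hlast

lemma exists_small_out {V : Type*} [Fintype V] (A : V → V → Prop) (K : Finset ℕ)
    (hcyc : ∀ (n : ℕ) (f : ZMod n → V), IsDicycle A n f → n ∈ K)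
    (S : Finset V) (hS : S.Nonempty) :
    ∃ v ∈ S, ∃ N : Finset V, (∀ u ∈ S, A v u → u ∈ N) ∧ N.card ≤ K.card := by
  classical
  set P : Set ℕ := {n | ∃ l : List V,
    (l ≠ [] ∧ l.Nodup ∧ (∀ x ∈ l, x ∈ S) ∧ l.Chain' A) ∧ l.length = n} with hP
  obtain ⟨x, hx⟩ := hS
  have hPne : P.Nonempty := ⟨1, [x], ⟨by simp, by simp, by simpa, List.isChain_singleton x⟩, rfl⟩
  have hPbdd : BddAbove P := ⟨Fintype.card V, by
    rintro n ⟨l, hl, rfl⟩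
    exact hl.2.1.length_le_card⟩
  obtain ⟨l, ⟨hne, hnd, hmem, hch⟩, hlen⟩ := Nat.sSup_mem hPne hPbdd
  have hmax : ∀ m ∈ P, m ≤ sSup P := fun m hm => le_csSup hPbdd hm
  set v := l.getLast hne with hv
  refine ⟨v, hmem _ (List.getLast_mem hne), ?_⟩
  have hout : ∀ u ∈ S, A v u → u ∈ l := by
    intro u hu hAu
    by_contra hul
    have hmem' : (l ++ [u]).length ∈ P := by
      rw [hP]
      refine ⟨l ++ [u], ⟨by simp, ?_, ?_, ?_⟩, rfl⟩
      · simp [List.nodup_append, hnd, hul]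
        rintro a ha rfl; exact hul ha
      · intro y hy
        rcases List.mem_append.mp hy with h | h
        · exact hmem y h
        · simp at h; subst h; exact hu
      · apply List.isChain_append.mpr
        refine ⟨hch, List.isChain_singleton u, ?_⟩
        intro a ha b hb
        rw [List.getLast?_eq_getLast hne] at ha
        simp at ha hb
        subst ha; subst hb
        exact hAu
    have := hmax _ hmem'
    simp only [List.length_append, List.length_singleton] at this
    omega
  refine ⟨l.toFinset.filter (fun u => A v u), ?_, ?_⟩
  · intro u hu hAu
    simp only [Finset.mem_filter, List.mem_toFinset]
    exact ⟨hout u hu hAu, hAu⟩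
  · apply Finset.card_le_card_of_injOn (fun u => l.length - l.idxOf u)
    · intro u hu
      simp only [Finset.mem_coe, Finset.mem_filter, List.mem_toFinset] at hu
      obtain ⟨hul, hAu⟩ := hu
      have hi : l.idxOf u < l.length := List.idxOf_lt_length_iff.mpr hul
      have hdne : l.drop (l.idxOf u) ≠ [] := by
        intro h
        have := congrArg List.length h
        simp at this
        omega
      have hhead : (l.drop (l.idxOf u)).head hdne = u := by
        rw [List.head_drop]
        simpa using List.idxOf_get hi
      have hlst : (l.drop (l.idxOf u)).getLast hdne = v := List.getLast_drop hdne
      obtain ⟨f, hf⟩ := isDicycle_of_list A _ hdne (hnd.sublist (List.drop_sublist _ _))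
        (hch.drop _) (by rw [hhead, hlst]; exact hAu)
      have hk := hcyc _ f hf
      simpa using hk
    · intro u1 hu1 u2 hu2 heq
      simp only [Finset.coe_filter, Set.mem_setOf_eq, List.mem_toFinset] at hu1 hu2
      have h1 : l.idxOf u1 < l.length := List.idxOf_lt_length_iff.mpr hu1.1
      have h2 : l.idxOf u2 < l.length := List.idxOf_lt_length_iff.mpr hu2.1
      have hidx : l.idxOf u1 = l.idxOf u2 := by
        simp only at heq
        omega
      calc u1 = l.get ⟨l.idxOf u1, h1⟩ := (List.idxOf_get h1).symm
        _ = l.get ⟨l.idxOf u2, h2⟩ := by congr 1; exact Fin.ext hidx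
        _ = u2 := List.idxOf_get h2

lemma greedy {V : Type*} [Fintype V] (A : V → V → Prop)
    (hirr : Irreflexive A) (K : Finset ℕ)
    (hcyc : ∀ (n : ℕ) (f : ZMod n → V), IsDicycle A n f → n ∈ K)
    (L : V → Finset ℕ) (hL : ∀ v, K.card + 1 ≤ (L v).card) (S : Finset V) :
    ∃ c : V → ℕ, (∀ v ∈ S, c v ∈ L v) ∧
      ∀ col : ℕ, AcyclicSet A (↑S ∩ c ⁻¹' {col}) := by
  classical
  induction S using Finset.strongInduction with
  | _ S ih =>
  rcases S.eq_empty_or_nonempty with rfl | hS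
  · refine ⟨fun _ => 0, by simp, ?_⟩
    intro col n f hf hdc
    have := hf 0
    simp at this
  obtain ⟨v, hvS, N, hN, hNcard⟩ := exists_small_out A K hcyc S hS
  obtain ⟨c', hc'mem, hc'acyc⟩ := ih (S.erase v) (Finset.erase_ssubset hvS)
  have hnotsub : ¬ (L v ⊆ N.image c') := by
    intro hsub
    have h1 := Finset.card_le_card hsub
    have h2 := Finset.card_image_le (s := N) (f := c')
    have h3 := hL v
    omega
  obtain ⟨col, hcolL, hcolF⟩ := Finset.not_subset.mp hnotsub
  refine ⟨Function.update c' v col, ?_, ?_⟩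
  · intro u hu
    by_cases h : u = v
    · subst h; simpa using hcolL
    · rw [Function.update_of_ne h]
      exact hc'mem u (Finset.mem_erase.mpr ⟨h, hu⟩)
  · intro col0 n f hf hdc
    obtain ⟨hn, hinj, harc⟩ := hdc
    by_cases hvf : ∃ i, f i = v
    · obtain ⟨i, hi⟩ := hvf
      have hn2 : 2 ≤ n := by
        by_contra h
        push_neg at h
        have h1 : n = 1 := by omega
        subst h1
        have := harc i
        rw [Subsingleton.elim (i + 1) i] at this
        exact hirr _ this
      haveI : NeZero n := ⟨by omega⟩
      have hne' : i + 1 ≠ i := by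
        intro h
        have h10 : (1 : ZMod n) = 0 := by
          have := add_right_cancel (a := (1 : ZMod n)) (b := i) (c := (0 : ZMod n))
            (by rw [add_comm, zero_add]; exact h)
          exact this
        haveI : Fact (1 < n) := ⟨hn2⟩
        have := congrArg ZMod.val h10
        rw [ZMod.val_one, ZMod.val_zero] at this
        omega
      have hune : f (i + 1) ≠ v := fun h => hne' (hinj (h.trans hi.symm))
      have huS : f (i + 1) ∈ S := by
        have := (hf (i + 1)).1
        simpa using this
      have hAu : A v (f (i + 1)) := by rw [← hi]; exact harc i
      have huN : f (i + 1) ∈ N := hN _ huS hAu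
      have hciv : Function.update c' v col (f i) = col0 := (hf i).2
      rw [hi, Function.update_self] at hciv
      have hcu : Function.update c' v col (f (i + 1)) = col0 := (hf (i + 1)).2
      rw [Function.update_of_ne hune] at hcu
      exact hcolF (Finset.mem_image.mpr ⟨f (i + 1), huN, by rw [hcu, hciv]⟩)
    · push_neg at hvf
      refine hc'acyc col0 n f ?_ ⟨hn, hinj, harc⟩
      intro j
      refine ⟨?_, ?_⟩
      · have := (hf j).1
        simp only [Finset.coe_erase, Set.mem_diff, Finset.mem_coe]
        exact ⟨by simpa using this, by simpa using hvf j⟩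
      · have := (hf j).2
        simp only [Set.mem_preimage, Set.mem_singleton_iff] at this ⊢
        rwa [Function.update_of_ne (hvf j)] at this

/-- If all directed cycle lengths of a simple digraph `D` belong to a set `K`
of size `k`, then the list dichromatic number of `D` is at most `k+1`: for any lists of
size at least `k+1` there is a coloring from the lists with no monochromatic directed cycle. -/
theorem stmt2 {V : Type*} [Fintype V] (A : V → V → Prop)
    (hirr : Irreflexive A) (K : Finset ℕ)
    (hcyc : ∀ (n : ℕ) (f : ZMod n → V), IsDicycle A n f → n ∈ K)
    (L : V → Finset ℕ) (hL : ∀ v, K.card + 1 ≤ (L v).card) :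
    ∃ c : V → ℕ, (∀ v, c v ∈ L v) ∧ ∀ col : ℕ, AcyclicSet A (c ⁻¹' {col}) := by
  obtain ⟨c, hcm, hca⟩ := greedy A hirr K hcyc L hL Finset.univ
  refine ⟨c, fun v => hcm v (Finset.mem_univ v), ?_⟩
  intro col n f hf
  exact hca col n f (fun i => ⟨by simp, hf i⟩)
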